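/- arXiv:1904.01082 — 3 statements merged into one kernel-verified Lean document; each statement's English description precedes it below -/
import Mathlib

section
/- Let D ∈ 𝕋^{n×n} be the weighted adjacency matrix of a directed graph Γ on n nodes. Then Γ has a negative cycle if and only if some diagonal entry of the tropical power (I ⊕ D)^{⊙n} is negative. -/
open Tropical

/-- The total weight (in `𝕋 = ℝ ∪ {∞}`, modelled as `WithTop ℝ`) of the walk that starts
at `u` and successively visits the nodes in the list `l`. -/
noncomputable def walkWeight {n : ℕ} (D : Matrix (Fin n) (Fin n) (WithTop ℝ)) :
    Fin n → List (Fin n) → WithTop ℝ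
  | _, [] => 0
  | u, w :: l => D u w + walkWeight D w l

namespace NegCycleAux

variable {n : ℕ}

/-- Final node of a walk starting at `u` visiting `l`. -/
def endNode : Fin n → List (Fin n) → Fin n
  | u, [] => u
  | _, w :: l => endNode w l

lemma endNode_getLast? (l : List (Fin n)) (u : Fin n) (h : l ≠ []) :
    l.getLast? = some (endNode u l) := by
  induction l generalizing u with
  | nil => simp at h
  | cons w l ih =>
    cases l with
    | nil => simp [endNode]
    | cons a t => rw [List.getLast?_cons_cons, ih a (by simp)]; simp [endNode]

lemma endNode_append (l₁ l₂ : List (Fin n)) (u : Fin n) :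
    endNode u (l₁ ++ l₂) = endNode (endNode u l₁) l₂ := by
  induction l₁ generalizing u with
  | nil => simp [endNode]
  | cons w l ih => simp [endNode, ih]

lemma walkWeight_append (D : Matrix (Fin n) (Fin n) (WithTop ℝ)) (l₁ l₂ : List (Fin n))
    (u : Fin n) :
    walkWeight D u (l₁ ++ l₂) = walkWeight D u l₁ + walkWeight D (endNode u l₁) l₂ := by
  induction l₁ generalizing u with
  | nil => simp [walkWeight, endNode]
  | cons w l ih => simp [walkWeight, endNode, ih, add_assoc]

lemma untrop_mul_apply (B C : Matrix (Fin n) (Fin n) (Tropical (WithTop ℝ))) (u v w : Fin n) :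
    untrop ((B * C) u v) ≤ untrop (B u w) + untrop (C w v) := by
  rw [Matrix.mul_apply, Finset.untrop_sum']
  calc Finset.univ.inf (untrop ∘ fun k => B u k * C k v) ≤ untrop (B u w * C w v) :=
        Finset.inf_le (Finset.mem_univ w)
    _ = _ := untrop_mul _ _

variable (D : Matrix (Fin n) (Fin n) (Tropical (WithTop ℝ)))

lemma untrop_A_le (u w : Fin n) : untrop ((1 + D) u w) ≤ untrop (D u w) := by
  rw [Matrix.add_apply, untrop_add]; exact min_le_right _ _

lemma untrop_A_diag_le (u : Fin n) : untrop ((1 + D) u u) ≤ 0 := by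
  rw [Matrix.add_apply, untrop_add]
  exact le_trans (min_le_left _ _) (by rw [Matrix.one_apply_eq, untrop_one])

lemma pow_apply_le_walkWeight (l : List (Fin n)) (u : Fin n) :
    untrop (((1 + D) ^ l.length) u (endNode u l)) ≤
      walkWeight (fun a b => untrop (D a b)) u l := by
  induction l generalizing u with
  | nil => simp [endNode, walkWeight, Matrix.one_apply_eq, untrop_one]
  | cons w l ih =>
    calc untrop (((1 + D) ^ (w :: l).length) u (endNode u (w :: l)))
        ≤ untrop ((1 + D) u w) + untrop (((1 + D) ^ l.length) w (endNode w l)) := by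
          rw [show (w :: l).length = l.length + 1 from rfl, pow_succ']
          exact untrop_mul_apply _ _ _ _ w
      _ ≤ untrop (D u w) + walkWeight (fun a b => untrop (D a b)) w l :=
          add_le_add (untrop_A_le D u w) (ih w)
      _ = _ := rfl

lemma diag_pow_nonpos (k : ℕ) (u : Fin n) : untrop (((1 + D) ^ k) u u) ≤ 0 := by
  induction k with
  | zero => simp [Matrix.one_apply_eq, untrop_one]
  | succ k ih =>
    calc untrop (((1 + D) ^ (k + 1)) u u)
        ≤ untrop ((1 + D) u u) + untrop (((1 + D) ^ k) u u) := by
          rw [pow_succ']; exact untrop_mul_apply _ _ _ _ u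
      _ ≤ 0 + 0 := add_le_add (untrop_A_diag_le D u) ih
      _ = 0 := add_zero _

lemma pow_n_le_pow_k {k : ℕ} (hk : k ≤ n) (u : Fin n) :
    untrop (((1 + D) ^ n) u u) ≤ untrop (((1 + D) ^ k) u u) := by
  have h : (1 + D) ^ n = (1 + D) ^ k * (1 + D) ^ (n - k) := by
    rw [← pow_add, Nat.add_sub_cancel' hk]
  calc untrop (((1 + D) ^ n) u u)
      ≤ untrop (((1 + D) ^ k) u u) + untrop (((1 + D) ^ (n - k)) u u) := by
        rw [h]; exact untrop_mul_apply _ _ _ _ u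
    _ ≤ untrop (((1 + D) ^ k) u u) + 0 := add_le_add le_rfl (diag_pow_nonpos D _ u)
    _ = _ := add_zero _

lemma exists_walk (k : ℕ) (u v : Fin n) :
    ∃ l : List (Fin n), endNode u l = v ∧
      walkWeight (fun a b => untrop (D a b)) u l ≤ untrop (((1 + D) ^ k) u v) := by
  induction k generalizing u v with
  | zero =>
    by_cases h : u = v
    · subst h
      exact ⟨[], rfl, by simp [walkWeight, Matrix.one_apply_eq, untrop_one]⟩
    · exact ⟨[v], rfl, by rw [pow_zero, Matrix.one_apply_ne h, untrop_zero]; exact le_top⟩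
  | succ k ih =>
    obtain ⟨w, -, hw⟩ := Finset.exists_mem_eq_inf (Finset.univ) ⟨u, Finset.mem_univ u⟩
      (untrop ∘ fun w => (1 + D) u w * ((1 + D) ^ k) w v)
    have hterm : untrop (((1 + D) ^ (k + 1)) u v)
        = untrop ((1 + D) u w) + untrop (((1 + D) ^ k) w v) := by
      rw [pow_succ', Matrix.mul_apply, Finset.untrop_sum', hw]
      simp [untrop_mul]
    obtain ⟨l, hl, hwl⟩ := ih w v
    have hA : untrop ((1 + D) u w)
        = min (untrop ((1 : Matrix (Fin n) (Fin n) (Tropical (WithTop ℝ))) u w))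
          (untrop (D u w)) := by rw [Matrix.add_apply, untrop_add]
    rcases min_cases (untrop ((1 : Matrix (Fin n) (Fin n) (Tropical (WithTop ℝ))) u w))
      (untrop (D u w)) with ⟨hmin, -⟩ | ⟨hmin, -⟩
    · by_cases huw : u = w
      · subst huw
        refine ⟨l, hl, ?_⟩
        rw [hterm, hA, hmin, Matrix.one_apply_eq, untrop_one, zero_add]
        exact hwl
      · refine ⟨w :: l, hl, ?_⟩
        rw [hterm, hA, hmin, Matrix.one_apply_ne huw, untrop_zero, top_add]
        exact le_top
    · refine ⟨w :: l, hl, ?_⟩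
      rw [hterm, hA, hmin]
      exact add_le_add le_rfl hwl

lemma list_split {α : Type*} (s : List α) (i j : ℕ) (hij : i < j) (hj : j < s.length)
    (heq : s[i]'(by omega) = s[j]'hj) :
    ∃ a b c : List α, s = a ++ s[j]'hj :: (b ++ s[j]'hj :: c) ∧ a.length = i ∧
      b.length = j - i - 1 ∧ c.length = s.length - j - 1 := by
  refine ⟨s.take i, (s.drop (i+1)).take (j - i - 1), s.drop (j+1), ?_, ?_, ?_, ?_⟩
  · conv_lhs => rw [← List.take_append_drop i s,
      List.drop_eq_getElem_cons (by omega : i < s.length)]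
    rw [heq]
    congr 1
    congr 1
    conv_lhs => rw [← List.take_append_drop (j - i - 1) (s.drop (i+1))]
    congr 1
    rw [List.drop_drop, show i + 1 + (j - i - 1) = j by omega]
    exact List.drop_eq_getElem_cons hj
  · simp [List.length_take]; omega
  · simp [List.length_take]; omega
  · simp; omega

lemma neg_of_add_neg {x y : WithTop ℝ} (h : x + y < 0) : x < 0 ∨ y < 0 := by
  by_contra hc
  push_neg at hc
  exact absurd (add_nonneg hc.1 hc.2) (not_le.mpr h)

lemma forward : ∀ L : ℕ, ∀ u : Fin n, ∀ l : List (Fin n), l.length = L → l ≠ [] →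
    l.getLast? = some u → walkWeight (fun a b => untrop (D a b)) u l < 0 →
    ∃ v : Fin n, untrop (((1 + D) ^ n) v v) < 0 := by
  intro L
  induction L using Nat.strong_induction_on with
  | _ L IH =>
  intro u l hlen hne hlast hw
  set D' : Fin n → Fin n → WithTop ℝ := fun a b => untrop (D a b) with hD'
  by_cases hLn : L ≤ n
  · refine ⟨u, ?_⟩
    have hend : endNode u l = u := by
      have h := endNode_getLast? l u hne
      rw [hlast] at h
      exact (Option.some_inj.mp h).symm
    calc untrop (((1 + D) ^ n) u u) ≤ untrop (((1 + D) ^ L) u u) := pow_n_le_pow_k D hLn u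
      _ = untrop (((1 + D) ^ l.length) u (endNode u l)) := by rw [hlen, hend]
      _ ≤ walkWeight D' u l := pow_apply_le_walkWeight D l u
      _ < 0 := hw
  · push_neg at hLn
    set s := u :: l with hs
    have hslen : s.length = L + 1 := by simp [hs, hlen]
    obtain ⟨i0, j0, hne', hfeq⟩ := Fintype.exists_ne_map_eq_of_card_lt
      (fun k : Fin L => s[(k : ℕ)]'(by omega)) (by simp; omega)
    -- wlog i < j
    obtain ⟨i, j, hij, hjL, hi', hj', heq⟩ : ∃ i j : ℕ, i < j ∧ j < L ∧
        ∃ (hi : i < s.length) (hj : j < s.length), s[i]'hi = s[j]'hj := by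
      rcases lt_or_gt_of_ne hne' with h | h
      · exact ⟨i0, j0, h, j0.isLt, by omega, by omega, hfeq⟩
      · exact ⟨j0, i0, h, i0.isLt, by omega, by omega, hfeq.symm⟩
    obtain ⟨a, b, c, hsplit, hal, hbl, hcl⟩ :=
      list_split s i j hij hj' heq
    set x := s[j]'hj' with hx
    have hcne : c ≠ [] := by
      intro hcnil
      rw [hcnil] at hcl
      simp at hcl
      omega
    cases a with
    | nil =>
      have hl0 : u = x ∧ l = b ++ x :: c := by
        rw [hs] at hsplit
        simpa using hsplit
      obtain ⟨hux, hl⟩ := hl0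
      have hl' : l = (b ++ [x]) ++ c := by simp [hl]
      have hend1 : endNode u (b ++ [x]) = x := by rw [endNode_append]; rfl
      have hw' : walkWeight D' u (b ++ [x]) + walkWeight D' x c < 0 := by
        rw [hl', walkWeight_append D' (b ++ [x]) c, hend1] at hw
        exact hw
      have hclast : c.getLast? = some u := by
        rw [← List.getLast?_append_of_ne_nil (b ++ [x]) hcne, ← hl', hlast]
      have hi0 : i = 0 := by simpa using hal.symm
      rcases neg_of_add_neg hw' with h1 | h2
      · refine IH (b ++ [x]).length (by simp; omega) u (b ++ [x]) rfl (by simp) ?_ h1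
        rw [endNode_getLast? (b ++ [x]) u (by simp), hend1, hux]
      · refine IH c.length (by omega) u c rfl hcne hclast ?_
        rw [hux]
        exact h2
    | cons y a' =>
      have hl0 : u = y ∧ l = a' ++ x :: (b ++ x :: c) := by
        rw [hs] at hsplit
        simpa using hsplit
      obtain ⟨huy, hl⟩ := hl0
      have hl' : l = (a' ++ [x]) ++ ((b ++ [x]) ++ c) := by simp [hl]
      have hend1 : endNode u (a' ++ [x]) = x := by rw [endNode_append]; rfl
      have hend2 : endNode x (b ++ [x]) = x := by rw [endNode_append]; rfl
      have hw' : walkWeight D' u (a' ++ [x])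
          + (walkWeight D' x (b ++ [x]) + walkWeight D' x c) < 0 := by
        rw [hl', walkWeight_append D' (a' ++ [x]) ((b ++ [x]) ++ c), hend1,
          walkWeight_append D' (b ++ [x]) c, hend2] at hw
        exact hw
      rw [add_left_comm] at hw'
      have hclast : c.getLast? = some u := by
        rw [← List.getLast?_append_of_ne_nil ((a' ++ [x]) ++ (b ++ [x])) hcne]
        rw [show (a' ++ [x]) ++ (b ++ [x]) ++ c = (a' ++ [x]) ++ ((b ++ [x]) ++ c) by simp]
        rw [← hl', hlast]
      have hal' : a'.length + 1 = i := by simpa using hal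
      rcases neg_of_add_neg hw' with h1 | h2
      · refine IH (b ++ [x]).length (by simp; omega) x (b ++ [x]) rfl (by simp) ?_ h1
        rw [endNode_getLast? (b ++ [x]) x (by simp), hend2]
      · have hrem : walkWeight D' u ((a' ++ [x]) ++ c)
            = walkWeight D' u (a' ++ [x]) + walkWeight D' x c := by
          rw [walkWeight_append D' (a' ++ [x]) c, hend1]
        refine IH ((a' ++ [x]) ++ c).length (by simp; omega) u ((a' ++ [x]) ++ c) rfl
          (by simp) ?_ ?_
        · rw [List.getLast?_append_of_ne_nil _ hcne, hclast]
        · rw [hrem]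
          exact h2

end NegCycleAux

/-- the graph with weighted adjacency matrix `D` has a negative cycle
(a nonempty closed walk of negative total weight) if and only if some diagonal entry of
the tropical power `(I ⊕ D)^{⊙n}` is negative. -/
theorem negative_cycle_iff_negative_diagonal {n : ℕ}
    (D : Matrix (Fin n) (Fin n) (Tropical (WithTop ℝ))) :
    (∃ (u : Fin n) (l : List (Fin n)), l ≠ [] ∧ l.getLast? = some u ∧
        walkWeight (fun a b => Tropical.untrop (D a b)) u l < 0) ↔
      ∃ u : Fin n, Tropical.untrop (((1 + D) ^ n) u u) < 0 := by
  constructor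
  · rintro ⟨u, l, hne, hlast, hw⟩
    exact NegCycleAux.forward D l.length u l rfl hne hlast hw
  · rintro ⟨u, hu⟩
    obtain ⟨l, hend, hle⟩ := NegCycleAux.exists_walk D n u u
    have hw : walkWeight (fun a b => Tropical.untrop (D a b)) u l < 0 := lt_of_le_of_lt hle hu
    have hne : l ≠ [] := by
      intro h
      rw [h] at hw
      simp [walkWeight] at hw
    exact ⟨u, l, hne, by rw [NegCycleAux.endNode_getLast? l u hne, hend], hw⟩
end

section
/- Let D ∈ 𝕋[x₁,…,x_k]^{n×n} be the weighted adjacency matrix of a directed graph with n nodes and m arcs, nonnegative weights, which is generic and has separated variables, and let t be a node. Then the number κ = κ(D,t) of shortest-path trees with target node t satisfies κ ≤ min( Φ(n,k), n^{n−2}, C(m, n−1) ), where Φ(n,k) = Σ_{i=0}^{k} C(k,i) · (i+1)^{n−i−1} and C(·,·) denotes binomial coefficients. -/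
/-- An entry of a parameterized weighted adjacency matrix: `none` is `∞` (no arc),
`some (c, none)` is the constant weight `c`, `some (c, some i)` is the weight `c + x_i`. -/
abbrev Entry (k : ℕ) := Option (ℝ × Option (Fin k))

/-- Evaluation of an entry at a parameter vector. -/
noncomputable def entryEval {k : ℕ} (e : Entry k) (x : Fin k → ℝ) : ℝ :=
  match e with
  | none => 0
  | some (c, none) => c
  | some (c, some i) => c + x i

/-- Pointwise `≤` on the parameter domain described by `P`. -/
def leOn {k : ℕ} (P : (Fin k → ℝ) → Prop) (f g : (Fin k → ℝ) → ℝ) : Prop :=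
  ∀ x, P x → f x ≤ g x

/-- Strict pointwise `<` (i.e. `≤` and not `≥`) on the parameter domain `P`. -/
def ltOn {k : ℕ} (P : (Fin k → ℝ) → Prop) (f g : (Fin k → ℝ) → ℝ) : Prop :=
  leOn P f g ∧ ¬ leOn P g f

/-- `par` encodes a shortest-path tree toward `t`. -/
def IsSPT {n k : ℕ} (E : Fin n → Fin n → Entry k) (P : (Fin k → ℝ) → Prop)
    (t : Fin n) (par : Fin n → Fin n) : Prop :=
  par t = t ∧ (∀ v, ∃ m : ℕ, par^[m] v = t) ∧
  (∀ v, v ≠ t → (E v (par v)).isSome) ∧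
  ∃ p : Fin n → (Fin k → ℝ) → ℝ,
    p t = (fun _ => 0) ∧
    (∀ v, v ≠ t → p v = fun x => entryEval (E v (par v)) x + p (par v) x) ∧
    (∀ v w : Fin n, (E v w).isSome →
      ¬ ltOn P (fun x => entryEval (E v w) x + p w x) (p v))

/-- `D` has separated variables: each indeterminate occurs in at most one entry. -/
def SeparatedVars {n k : ℕ} (E : Fin n → Fin n → Entry k) : Prop :=
  ∀ (i : Fin k) (u v u' v' : Fin n) (c c' : ℝ),
    E u v = some (c, some i) → E u' v' = some (c', some i) → u = u' ∧ v = v'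

/-- The matrix is generic: no two distinct collections of arcs have the same sum of
weights (as functions on the parameter domain `P`). -/
def Generic {n k : ℕ} (E : Fin n → Fin n → Entry k) (P : (Fin k → ℝ) → Prop) : Prop :=
  ∀ A B : Finset (Fin n × Fin n),
    (∀ a ∈ A, (E a.1 a.2).isSome) → (∀ b ∈ B, (E b.1 b.2).isSome) → A ≠ B →
    ∃ x, P x ∧ ∑ a ∈ A, entryEval (E a.1 a.2) x ≠ ∑ b ∈ B, entryEval (E b.1 b.2) x
namespace SPTProof


variable {n : ℕ}

section Tree

variable (par : Fin n → Fin n) (t : Fin n)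

/-- depth of `v`: number of steps to reach `t`. -/
noncomputable def dep (hreach : ∀ v, ∃ m : ℕ, par^[m] v = t) (v : Fin n) : ℕ :=
  Nat.find (hreach v)

variable (hreach : ∀ v, ∃ m : ℕ, par^[m] v = t)

theorem iter_dep (v : Fin n) : par^[dep par t hreach v] v = t := Nat.find_spec (hreach v)

theorem dep_min {v : Fin n} {i : ℕ} (h : i < dep par t hreach v) : par^[i] v ≠ t :=
  Nat.find_min (hreach v) h

theorem dep_t : dep par t hreach t = 0 := by
  have : par^[0] t = t := rfl
  exact Nat.le_zero.mp (Nat.find_le this)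

theorem dep_pos {v : Fin n} (hv : v ≠ t) : 0 < dep par t hreach v := by
  rcases Nat.eq_zero_or_pos (dep par t hreach v) with h | h
  · exact absurd (by simpa [h] using iter_dep par t hreach v) hv
  · exact h

theorem dep_par {v : Fin n} (hv : v ≠ t) :
    dep par t hreach (par v) + 1 = dep par t hreach v := by
  have hpos := dep_pos par t hreach hv
  have h1 : par^[dep par t hreach v - 1] (par v) = t := by
    have h0 : par^[dep par t hreach v - 1 + 1] v = t := by
      rw [show dep par t hreach v - 1 + 1 = dep par t hreach v by omega]
      exact iter_dep par t hreach v
    rw [Function.iterate_add_apply] at h0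
    simpa using h0
  have h2 : dep par t hreach (par v) ≤ dep par t hreach v - 1 := Nat.find_le h1
  have h3 : par^[dep par t hreach (par v) + 1] v = t := by
    rw [Function.iterate_succ_apply]; exact iter_dep par t hreach (par v)
  have h4 : dep par t hreach v ≤ dep par t hreach (par v) + 1 := Nat.find_le h3
  omega

theorem iter_ne_of_lt {v : Fin n} {i j : ℕ} (hij : i < j) (hj : j ≤ dep par t hreach v) :
    par^[i] v ≠ par^[j] v := by
  intro h
  have key : par^[dep par t hreach v - (j - i)] v = t := by
    have : dep par t hreach v - (j - i) + (j - i) = dep par t hreach v := by omega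
    calc par^[dep par t hreach v - (j - i)] v
        = par^[(dep par t hreach v - j) + i] v := by congr 1; omega
      _ = par^[dep par t hreach v - j] (par^[i] v) := by
          rw [Function.iterate_add_apply]
      _ = par^[dep par t hreach v - j] (par^[j] v) := by rw [h]
      _ = par^[(dep par t hreach v - j) + j] v := by rw [Function.iterate_add_apply]
      _ = t := by rw [show dep par t hreach v - j + j = dep par t hreach v by omega]
                  exact iter_dep par t hreach v
  exact dep_min par t hreach (by omega) key

theorem iter_inj {v : Fin n} {i j : ℕ} (hi : i ≤ dep par t hreach v)
    (hj : j ≤ dep par t hreach v) (h : par^[i] v = par^[j] v) : i = j := by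
  rcases lt_trichotomy i j with hlt | he | hgt
  · exact absurd h (iter_ne_of_lt par t hreach hlt hj)
  · exact he
  · exact absurd h.symm (iter_ne_of_lt par t hreach hgt hi)

theorem dep_lt_n (v : Fin n) : dep par t hreach v < n := by
  have hinj : Function.Injective (fun i : Fin (dep par t hreach v + 1) => par^[(i : ℕ)] v) := by
    intro i j h
    exact Fin.ext (iter_inj par t hreach (Nat.lt_succ_iff.mp i.2) (Nat.lt_succ_iff.mp j.2) h)
  have := Fintype.card_le_of_injective _ hinj
  simpa using this

/-- arc list of the tree path from `v` to `t`, with fuel. -/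
def pathA (par : Fin n → Fin n) (t : Fin n) : ℕ → Fin n → List (Fin n × Fin n)
  | 0, _ => []
  | (f+1), v => if v = t then [] else (v, par v) :: pathA par t f (par v)

theorem pathA_t (f : ℕ) : pathA par t f t = [] := by
  cases f <;> simp [pathA]

theorem dep_eq_zero_iff {v : Fin n} : dep par t hreach v = 0 ↔ v = t := by
  constructor
  · intro h
    have h2 := iter_dep par t hreach v
    rw [h] at h2
    simpa using h2
  · intro h; rw [h]; exact dep_t par t hreach

theorem pathA_stable : ∀ (f g : ℕ) (v : Fin n), dep par t hreach v ≤ f →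
    dep par t hreach v ≤ g → pathA par t f v = pathA par t g v := by
  intro f
  induction f with
  | zero =>
    intro g v hf _
    have hv : v = t := (dep_eq_zero_iff par t hreach).mp (Nat.le_zero.mp hf)
    rw [hv, pathA_t, pathA_t]
  | succ f ih =>
    intro g v hf hg
    by_cases hv : v = t
    · rw [hv, pathA_t, pathA_t]
    · have hd := dep_par par t hreach hv
      rcases g with _ | g
      · exact absurd ((dep_eq_zero_iff par t hreach).mp (Nat.le_zero.mp hg)) hv
      · simp only [pathA, if_neg hv]
        rw [ih g (par v) (by omega) (by omega)]

/-- the canonical path: fuel `n`. -/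
def path (v : Fin n) : List (Fin n × Fin n) := pathA par t n v

theorem path_t : path par t t = [] := pathA_t par t n

include hreach in
theorem path_eq {v : Fin n} (hv : v ≠ t) :
    path par t v = (v, par v) :: path par t (par v) := by
  have hd := dep_par par t hreach hv
  have hdv := dep_lt_n par t hreach v
  obtain ⟨n', rfl⟩ : ∃ n', n = n' + 1 := ⟨n - 1, by omega⟩
  show pathA par t (n' + 1) v = _
  simp only [pathA, if_neg hv]
  congr 1
  exact pathA_stable par t hreach n' (n' + 1) (par v) (by omega) (by omega)

theorem mem_path {v : Fin n} {a : Fin n × Fin n} :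
    a ∈ path par t v ↔ ∃ i < dep par t hreach v, a = (par^[i] v, par^[i+1] v) := by
  have H : ∀ (d : ℕ) (v : Fin n), dep par t hreach v = d →
      (a ∈ path par t v ↔ ∃ i < dep par t hreach v, a = (par^[i] v, par^[i+1] v)) := by
    intro d
    induction d using Nat.strong_induction_on with
    | _ d ih =>
      intro v hd
      by_cases hv : v = t
      · rw [hv]
        simp [path_t, dep_t par t hreach]
      · rw [path_eq par t hreach hv]
        have hstep := dep_par par t hreach hv
        constructor
        · intro hmem
          rcases List.mem_cons.mp hmem with h | h
          · exact ⟨0, by omega, by simpa using h⟩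
          · obtain ⟨i, hi, ha⟩ := (ih (dep par t hreach (par v)) (by omega) (par v) rfl).mp h
            refine ⟨i + 1, by omega, ?_⟩
            rw [ha]
            simp [Function.iterate_succ_apply]
        · rintro ⟨i, hi, ha⟩
          rcases i with _ | i
          · simp only [Function.iterate_zero_apply, Function.iterate_one] at ha
            exact List.mem_cons.mpr (Or.inl ha)
          · refine List.mem_cons.mpr (Or.inr ?_)
            refine (ih (dep par t hreach (par v)) (by omega) (par v) rfl).mpr ⟨i, by omega, ?_⟩
            rw [ha]
            simp [Function.iterate_succ_apply]
  exact H _ v rfl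

include hreach in
theorem path_snd {v : Fin n} {a : Fin n × Fin n} (h : a ∈ path par t v) : a.2 = par a.1 := by
  obtain ⟨i, _, rfl⟩ := (mem_path par t hreach).mp h
  simp [Function.iterate_succ_apply']

include hreach in
theorem path_fst_ne_t {v : Fin n} {a : Fin n × Fin n} (h : a ∈ path par t v) : a.1 ≠ t := by
  obtain ⟨i, hi, rfl⟩ := (mem_path par t hreach).mp h
  exact dep_min par t hreach hi

include hreach in
theorem self_mem_path {v : Fin n} (hv : v ≠ t) : (v, par v) ∈ path par t v := by
  rw [path_eq par t hreach hv]; exact List.mem_cons_self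

include hreach in
theorem not_mem_path_self {w : Fin n} {a : Fin n × Fin n} (h : a ∈ path par t w)
    (ha : a.2 = w) : False := by
  obtain ⟨i, hi, rfl⟩ := (mem_path par t hreach).mp h
  exact iter_ne_of_lt par t hreach (Nat.succ_pos i) hi
    (show par^[0] w = par^[i+1] w by simpa using ha.symm)

include hreach in
theorem path_nodup (v : Fin n) : (path par t v).Nodup := by
  have hmap : ((path par t v).map Prod.fst).Nodup := by
    have H : ∀ (d : ℕ) (v : Fin n), dep par t hreach v = d →
        ((path par t v).map Prod.fst).Nodup := by
      intro d
      induction d using Nat.strong_induction_on with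
      | _ d ih =>
        intro v hd
        by_cases hv : v = t
        · rw [hv]; simp [path_t]
        · rw [path_eq par t hreach hv]
          have hstep := dep_par par t hreach hv
          simp only [List.map_cons, List.nodup_cons]
          refine ⟨?_, ih (dep par t hreach (par v)) (by omega) (par v) rfl⟩
          intro hcon
          obtain ⟨a, ha, hfst⟩ := List.mem_map.mp hcon
          obtain ⟨i, hi, rfl⟩ := (mem_path par t hreach).mp ha
          have h0 : par^[0] v = par^[i+1] v := by
            simp only [Function.iterate_zero_apply]
            rw [Function.iterate_succ_apply]
            exact hfst.symm
          exact iter_ne_of_lt par t hreach (Nat.succ_pos i) (by omega) h0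
    exact H _ v rfl
  exact List.Nodup.of_map _ hmap

end Tree




section Pot

variable {n k : ℕ} (E : Fin n → Fin n → Entry k) (par : Fin n → Fin n) (t : Fin n)

/-- variable of an arc (if any) -/
def varOf (a : Fin n × Fin n) : Option (Fin k) := (E a.1 a.2).bind Prod.snd

/-- constant part of an arc weight -/
def constOf (a : Fin n × Fin n) : ℝ := ((E a.1 a.2).map Prod.fst).getD 0

/-- path weight function -/
noncomputable def pw (v : Fin n) (x : Fin k → ℝ) : ℝ :=
  ((path par t v).map (fun a => entryEval (E a.1 a.2) x)).sum

/-- list of variables on the path from `v` to `t` -/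
def varsList (v : Fin n) : List (Fin k) := (path par t v).filterMap (varOf E)

/-- first variable on the path from `v` to `t` -/
def psi (v : Fin n) : Option (Fin k) := (varsList E par t v).head?

/-- sum of constant parts along the path -/
noncomputable def constPath (v : Fin n) : ℝ := ((path par t v).map (constOf E)).sum

variable (hreach : ∀ v, ∃ m : ℕ, par^[m] v = t)

theorem pw_t (x : Fin k → ℝ) : pw E par t t x = 0 := by simp [pw, path_t]

theorem varsList_t : varsList E par t t = [] := by simp [varsList, path_t]

theorem psi_t : psi E par t t = none := by simp [psi, varsList_t]

theorem constPath_t : constPath E par t t = 0 := by simp [constPath, path_t]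

include hreach

theorem pw_step {v : Fin n} (hv : v ≠ t) (x : Fin k → ℝ) :
    pw E par t v x = entryEval (E v (par v)) x + pw E par t (par v) x := by
  simp [pw, path_eq par t hreach hv]

theorem constPath_step {v : Fin n} (hv : v ≠ t) :
    constPath E par t v = constOf E (v, par v) + constPath E par t (par v) := by
  simp [constPath, path_eq par t hreach hv]

theorem varsList_step {v : Fin n} (hv : v ≠ t) :
    varsList E par t v = ((varOf E (v, par v)).toList) ++ varsList E par t (par v) := by
  rw [varsList, path_eq par t hreach hv, List.filterMap_cons]
  cases h : varOf E (v, par v) <;> simp [h, varsList]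

/-- uniqueness of the potential in `IsSPT` -/
theorem p_unique (p : Fin n → (Fin k → ℝ) → ℝ) (hp0 : p t = fun _ => 0)
    (hps : ∀ v, v ≠ t → p v = fun x => entryEval (E v (par v)) x + p (par v) x) :
    ∀ v, p v = pw E par t v := by
  have H : ∀ (d : ℕ) (v : Fin n), dep par t hreach v = d → p v = pw E par t v := by
    intro d
    induction d using Nat.strong_induction_on with
    | _ d ih =>
      intro v hd
      by_cases hv : v = t
      · rw [hv, hp0]; funext x; rw [pw_t]
      · have hstep := dep_par par t hreach hv
        rw [hps v hv]
        funext x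
        rw [pw_step E par t hreach hv]
        rw [ih (dep par t hreach (par v)) (by omega) (par v) rfl]
  intro v; exact H _ v rfl

omit hreach in
theorem entryEval_decomp {a : Fin n × Fin n} (ha : (E a.1 a.2).isSome) (x : Fin k → ℝ) :
    entryEval (E a.1 a.2) x = constOf E a + ((varOf E a).toList.map x).sum := by
  rcases h : E a.1 a.2 with _ | ⟨c, _ | j⟩
  · rw [h] at ha; simp at ha
  · simp [entryEval, h, constOf, varOf]
  · simp [entryEval, h, constOf, varOf]

variable (hsome : ∀ v, v ≠ t → (E v (par v)).isSome)

include hsome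

theorem path_isSome {v : Fin n} {a : Fin n × Fin n} (h : a ∈ path par t v) :
    (E a.1 a.2).isSome := by
  have h2 := path_snd par t hreach h
  have h1 := path_fst_ne_t par t hreach h
  have := hsome a.1 h1
  rwa [← h2] at this

theorem pw_formula (v : Fin n) (x : Fin k → ℝ) :
    pw E par t v x = constPath E par t v + ((varsList E par t v).map x).sum := by
  have H : ∀ (d : ℕ) (v : Fin n), dep par t hreach v = d →
      pw E par t v x = constPath E par t v + ((varsList E par t v).map x).sum := by
    intro d
    induction d using Nat.strong_induction_on with
    | _ d ih =>
      intro v hd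
      by_cases hv : v = t
      · rw [hv, pw_t, constPath_t, varsList_t]; simp
      · have hstep := dep_par par t hreach hv
        rw [pw_step E par t hreach hv, constPath_step E par t hreach hv,
          varsList_step E par t hreach hv,
          ih (dep par t hreach (par v)) (by omega) (par v) rfl,
          entryEval_decomp E (a := (v, par v)) (hsome v hv) x]
        simp
        ring
  exact H _ v rfl

end Pot



section Det

variable {n k : ℕ} (E : Fin n → Fin n → Entry k) (t : Fin n)

-- the unique arc carrying variable `j` (junk value `(t,t)` if none).
open Classical in
noncomputable def arcOf (j : Fin k) : Fin n × Fin n :=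
  if h : ∃ a : Fin n × Fin n, ∃ c : ℝ, E a.1 a.2 = some (c, some j) then h.choose else (t, t)

theorem arcOf_eq (hsep : SeparatedVars E) {u v : Fin n} {c : ℝ} {j : Fin k}
    (h : E u v = some (c, some j)) : arcOf E t j = (u, v) := by
  have hex : ∃ a : Fin n × Fin n, ∃ c : ℝ, E a.1 a.2 = some (c, some j) := ⟨(u, v), c, h⟩
  rw [arcOf, dif_pos hex]
  obtain ⟨c', hc'⟩ := hex.choose_spec
  obtain ⟨h1, h2⟩ := hsep j _ _ _ _ _ _ hc' h
  exact Prod.ext h1 h2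

theorem varOf_some_iff {a : Fin n × Fin n} {j : Fin k} :
    varOf E a = some j ↔ ∃ c, E a.1 a.2 = some (c, some j) := by
  rcases h : E a.1 a.2 with _ | ⟨c, _ | j'⟩ <;> simp [varOf, h]

variable (par : Fin n → Fin n) (hreach : ∀ v, ∃ m : ℕ, par^[m] v = t)

include hreach in
theorem psi_some (hsep : SeparatedVars E) {v : Fin n} {j : Fin k}
    (h : psi E par t v = some j) :
    varsList E par t v = j :: varsList E par t (arcOf E t j).2 := by
  have H : ∀ (d : ℕ) (v : Fin n), dep par t hreach v = d → psi E par t v = some j →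
      varsList E par t v = j :: varsList E par t (arcOf E t j).2 := by
    intro d
    induction d using Nat.strong_induction_on with
    | _ d ih =>
      intro v hd h
      by_cases hv : v = t
      · rw [hv, psi_t] at h; exact absurd h (by simp)
      · have hstep := dep_par par t hreach hv
        have hvl := varsList_step E par t hreach hv
        rcases hva : varOf E (v, par v) with _ | j'
        · rw [hva] at hvl
          simp only [Option.toList_none, List.nil_append] at hvl
          have hpsi : psi E par t v = psi E par t (par v) := by
            rw [psi, psi, hvl]
          rw [hpsi] at h
          rw [hvl]
          exact ih (dep par t hreach (par v)) (by omega) (par v) rfl h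
        · rw [hva] at hvl
          simp only [Option.toList_some, List.singleton_append] at hvl
          have hpsi : psi E par t v = some j' := by rw [psi, hvl]; rfl
          have hj : j' = j := by rw [hpsi] at h; exact Option.some_injective _ h
          subst hj
          obtain ⟨c, hc⟩ := (varOf_some_iff E).mp hva
          have := arcOf_eq E t hsep hc
          rw [hvl, this]
  exact H _ v rfl h

theorem psi_none {v : Fin n} (h : psi E par t v = none) : varsList E par t v = [] := by
  rwa [psi, List.head?_eq_none_iff] at h

end Det

section Det2

variable {n k : ℕ} (E : Fin n → Fin n → Entry k) (t : Fin n)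
  (par1 par2 : Fin n → Fin n)
  (hreach1 : ∀ v, ∃ m : ℕ, par1^[m] v = t) (hreach2 : ∀ v, ∃ m : ℕ, par2^[m] v = t)

include hreach1 hreach2 in
theorem varsList_eq_of_psi_eq (hsep : SeparatedVars E)
    (hpsi : ∀ v, psi E par1 t v = psi E par2 t v) (v : Fin n) :
    varsList E par1 t v = varsList E par2 t v := by
  have H : ∀ (L : ℕ) (v : Fin n), (varsList E par1 t v).length = L →
      varsList E par1 t v = varsList E par2 t v := by
    intro L
    induction L using Nat.strong_induction_on with
    | _ L ih =>
      intro v hL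
      rcases hp : psi E par1 t v with _ | j
      · have hp2 : psi E par2 t v = none := by rw [← hpsi v]; exact hp
        rw [psi_none E t par1 hp, psi_none E t par2 hp2]
      · have h1 := psi_some E t par1 hreach1 hsep hp
        have h2 := psi_some E t par2 hreach2 hsep (by rw [← hpsi v]; exact hp)
        rw [h1, h2]
        have hlen : (varsList E par1 t (arcOf E t j).2).length < L := by
          rw [← hL, h1]; simp
        rw [ih _ hlen _ rfl]
  exact H _ v rfl

end Det2


section Det3

variable {n k : ℕ} {E : Fin n → Fin n → Entry k} {t : Fin n}
  {P : (Fin k → ℝ) → Prop} {par1 par2 : Fin n → Fin n}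

theorem const_le (hgen : Generic E P) (hPne : ∃ x, P x)
    (h1 : IsSPT E P t par1) (h2 : IsSPT E P t par2)
    (hvl : ∀ v, varsList E par1 t v = varsList E par2 t v) :
    ∀ v, constPath E par1 t v ≤ constPath E par2 t v := by
  obtain ⟨hfix1, hreach1, hsome1, p1, hp10, hp1s, hopt1⟩ := h1
  obtain ⟨hfix2, hreach2, hsome2, p2, hp20, hp2s, hopt2⟩ := h2
  have hp1 : ∀ v, p1 v = pw E par1 t v := p_unique E par1 t hreach1 p1 hp10 hp1s
  have hpw12 : ∀ (v : Fin n) (x : Fin k → ℝ),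
      pw E par1 t v x = pw E par2 t v x +
        (constPath E par1 t v - constPath E par2 t v) := by
    intro v x
    rw [pw_formula E par1 t hreach1 hsome1 v x, pw_formula E par2 t hreach2 hsome2 v x,
      hvl v]
    ring
  obtain ⟨v0, -, hv0max⟩ := Finset.exists_max_image Finset.univ
    (fun v => constPath E par1 t v - constPath E par2 t v) ⟨t, Finset.mem_univ t⟩
  suffices hkey : constPath E par1 t v0 - constPath E par2 t v0 ≤ 0 by
    intro v
    have := hv0max v (Finset.mem_univ v)
    linarith
  by_contra hpos
  push_neg at hpos
  have H : ∀ (d : ℕ) (v : Fin n), dep par2 t hreach2 v = d →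
      constPath E par1 t v - constPath E par2 t v
        = constPath E par1 t v0 - constPath E par2 t v0 → False := by
    intro d
    induction d using Nat.strong_induction_on with
    | _ d ih =>
      intro v hd hcv
      by_cases hv : v = t
      · rw [hv, constPath_t, constPath_t] at hcv
        linarith
      · have harc : (E v (par2 v)).isSome := hsome2 v hv
        have hcond := hopt1 v (par2 v) harc
        rw [hp1 v, hp1 (par2 v)] at hcond
        have hcw : constPath E par1 t (par2 v) - constPath E par2 t (par2 v) ≤
            constPath E par1 t v0 - constPath E par2 t v0 :=
          hv0max (par2 v) (Finset.mem_univ (par2 v))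
        have hle : leOn P (fun x => entryEval (E v (par2 v)) x + pw E par1 t (par2 v) x)
            (pw E par1 t v) := by
          intro x hx
          dsimp only
          have e1 := hpw12 (par2 v) x
          have e2 : pw E par2 t v x
              = entryEval (E v (par2 v)) x + pw E par2 t (par2 v) x :=
            pw_step E par2 t hreach2 hv x
          have e3 := hpw12 v x
          linarith
        have hge : leOn P (pw E par1 t v)
            (fun x => entryEval (E v (par2 v)) x + pw E par1 t (par2 v) x) := by
          by_contra hge
          exact hcond ⟨hle, hge⟩
        have hnm : (v, par2 v) ∉ (path par1 t (par2 v)).toFinset := by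
          intro hmem
          exact not_mem_path_self par1 t hreach1 (List.mem_toFinset.mp hmem) rfl
        have hsumA : ∀ x : Fin k → ℝ,
            ∑ a ∈ insert (v, par2 v) (path par1 t (par2 v)).toFinset,
              entryEval (E a.1 a.2) x
            = entryEval (E v (par2 v)) x + pw E par1 t (par2 v) x := by
          intro x
          rw [Finset.sum_insert hnm]
          congr 1
          rw [pw, List.sum_toFinset _ (path_nodup par1 t hreach1 (par2 v))]
        have hsumB : ∀ x : Fin k → ℝ,
            ∑ a ∈ (path par1 t v).toFinset, entryEval (E a.1 a.2) x
            = pw E par1 t v x := by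
          intro x
          rw [pw, List.sum_toFinset _ (path_nodup par1 t hreach1 v)]
        have hAeqB : insert (v, par2 v) (path par1 t (par2 v)).toFinset
            = (path par1 t v).toFinset := by
          by_contra hne
          obtain ⟨x, hx, hsum⟩ := hgen _ _
            (by
              intro a ha
              rcases Finset.mem_insert.mp ha with h | h
              · rw [h]; exact harc
              · exact path_isSome E par1 t hreach1 hsome1 (List.mem_toFinset.mp h))
            (by
              intro a ha
              exact path_isSome E par1 t hreach1 hsome1 (List.mem_toFinset.mp ha))
            hne
          rw [hsumA x, hsumB x] at hsum
          exact hsum (le_antisymm (hle x hx) (hge x hx))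
        have hvw_mem : (v, par2 v) ∈ (path par1 t v).toFinset := by
          rw [← hAeqB]; exact Finset.mem_insert_self _ _
        have hwpar1 : par2 v = par1 v :=
          path_snd par1 t hreach1 (List.mem_toFinset.mp hvw_mem)
        have hcweq : constPath E par1 t (par2 v) - constPath E par2 t (par2 v)
            = constPath E par1 t v0 - constPath E par2 t v0 := by
          obtain ⟨x0, hx0⟩ := hPne
          have h1' := hle x0 hx0
          have h2' := hge x0 hx0
          dsimp only at h1' h2'
          have e1 := hpw12 (par2 v) x0
          have e2 : pw E par2 t v x0
              = entryEval (E v (par2 v)) x0 + pw E par2 t (par2 v) x0 :=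
            pw_step E par2 t hreach2 hv x0
          have e3 := hpw12 v x0
          linarith
        have hdw := dep_par par2 t hreach2 hv
        exact ih (dep par2 t hreach2 (par2 v)) (by omega) (par2 v) rfl hcweq
  exact H _ v0 rfl rfl

theorem determination (hsep : SeparatedVars E) (hgen : Generic E P) (hPne : ∃ x, P x)
    (h1 : IsSPT E P t par1) (h2 : IsSPT E P t par2)
    (hpsi : ∀ v, psi E par1 t v = psi E par2 t v) : par1 = par2 := by
  have hreach1 := h1.2.1
  have hreach2 := h2.2.1
  have hsome1 := h1.2.2.1
  have hsome2 := h2.2.2.1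
  have hfix1 := h1.1
  have hfix2 := h2.1
  have hvl := varsList_eq_of_psi_eq E t par1 par2 hreach1 hreach2 hsep hpsi
  have hle12 := const_le hgen hPne h1 h2 hvl
  have hle21 := const_le hgen hPne h2 h1 (fun v => (hvl v).symm)
  have hceq : ∀ v, constPath E par1 t v = constPath E par2 t v :=
    fun v => le_antisymm (hle12 v) (hle21 v)
  have hpweq : ∀ (v : Fin n) (x : Fin k → ℝ), pw E par1 t v x = pw E par2 t v x := by
    intro v x
    rw [pw_formula E par1 t hreach1 hsome1 v x, pw_formula E par2 t hreach2 hsome2 v x,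
      hvl v, hceq v]
  funext v
  by_cases hv : v = t
  · rw [hv, hfix1, hfix2]
  · have hAB : (path par1 t v).toFinset = (path par2 t v).toFinset := by
      by_contra hne
      obtain ⟨x, hx, hsum⟩ := hgen _ _
        (fun a ha => path_isSome E par1 t hreach1 hsome1 (List.mem_toFinset.mp ha))
        (fun a ha => path_isSome E par2 t hreach2 hsome2 (List.mem_toFinset.mp ha))
        hne
      apply hsum
      rw [List.sum_toFinset _ (path_nodup par1 t hreach1 v),
        List.sum_toFinset _ (path_nodup par2 t hreach2 v)]
      exact hpweq v x
    have hmem : (v, par1 v) ∈ (path par2 t v).toFinset := by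
      rw [← hAB]
      exact List.mem_toFinset.mpr (self_mem_path par1 t hreach1 hv)
    have := path_snd par2 t hreach2 (List.mem_toFinset.mp hmem)
    simpa using this

end Det3

section Count

variable {n k : ℕ} (E : Fin n → Fin n → Entry k) (t : Fin n)

open Classical in
/-- set of variables used by `f` -/
noncomputable def Ifin (f : Fin n → Option (Fin k)) : Finset (Fin k) :=
  Finset.univ.filter (fun j => ∃ v, f v = some j)

open Classical in
/-- candidate set of first-variable functions -/
noncomputable def GFin : Finset (Fin n → Option (Fin k)) :=
  Finset.univ.filter (fun f => f t = none ∧ ∀ j : Fin k, (∃ v, f v = some j) →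
    ((arcOf E t j).1 ≠ t ∧ f (arcOf E t j).1 = some j ∧
      ∃ c, E (arcOf E t j).1 (arcOf E t j).2 = some (c, some j)))

theorem mem_GFin_iff (f : Fin n → Option (Fin k)) :
    f ∈ GFin E t ↔ f t = none ∧ ∀ j : Fin k, (∃ v, f v = some j) →
    ((arcOf E t j).1 ≠ t ∧ f (arcOf E t j).1 = some j ∧
      ∃ c, E (arcOf E t j).1 (arcOf E t j).2 = some (c, some j)) := by
  classical
  simp [GFin]

theorem mem_Ifin_iff (f : Fin n → Option (Fin k)) (j : Fin k) :
    j ∈ Ifin f ↔ ∃ v, f v = some j := by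
  classical
  simp [Ifin]

theorem fiber_card_le (I : Finset (Fin k)) :
    ((GFin E t).filter (fun f => Ifin f = I)).card ≤ (I.card + 1) ^ (n - I.card - 1) := by
  classical
  rcases Finset.eq_empty_or_nonempty ((GFin E t).filter (fun f => Ifin f = I)) with he | hne
  · rw [he]; simp
  · obtain ⟨f0, hf0⟩ := hne
    have hf0G := Finset.mem_filter.mp hf0
    have hf0I : Ifin f0 = I := hf0G.2
    have hf0c := (mem_GFin_iff E t f0).mp hf0G.1
    -- facts about tails for j ∈ I
    have htail : ∀ j ∈ I, (arcOf E t j).1 ≠ t := by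
      intro j hj
      exact (hf0c.2 j ((mem_Ifin_iff f0 j).mp (hf0I ▸ hj))).1
    have htinj : Set.InjOn (fun j => (arcOf E t j).1) I := by
      intro j hj j' hj' hjj'
      have h1 := (hf0c.2 j ((mem_Ifin_iff f0 j).mp (hf0I ▸ hj))).2.1
      have h2 := (hf0c.2 j' ((mem_Ifin_iff f0 j').mp (hf0I ▸ hj'))).2.1
      simp only at hjj'
      rw [hjj'] at h1
      rw [h1] at h2
      exact Option.some_injective _ h2
    set T : Finset (Fin n) := insert t (I.image (fun j => (arcOf E t j).1)) with hT
    set D : Finset (Fin n) := Finset.univ \ T with hD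
    have hTcard : T.card = I.card + 1 := by
      rw [hT, Finset.card_insert_of_notMem (by
        intro hc
        obtain ⟨j, hj, hje⟩ := Finset.mem_image.mp hc
        exact htail j hj hje), Finset.card_image_of_injOn htinj]
    have hDcard : D.card = n - I.card - 1 := by
      rw [hD, Finset.card_sdiff_of_subset (Finset.subset_univ T), hTcard]
      simp [Nat.sub_sub]
    -- the injection into functions D → Option I
    set Ψ : (Fin n → Option (Fin k)) → ({v // v ∈ D} → Option {j // j ∈ I}) :=
      fun f v => if h : ∃ j, j ∈ I ∧ f v.1 = some j
        then some ⟨h.choose, h.choose_spec.1⟩ else none with hΨ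
    have hrec : ∀ f ∈ (GFin E t).filter (fun f => Ifin f = I), ∀ (v : {v // v ∈ D}),
        (Ψ f v = none → f v.1 = none) ∧
        (∀ jj : {j // j ∈ I}, Ψ f v = some jj → f v.1 = some jj.1) := by
      intro f hf v
      have hfI : Ifin f = I := (Finset.mem_filter.mp hf).2
      constructor
      · intro hnone
        rcases hfv : f v.1 with _ | j
        · rfl
        · exfalso
          have hjI : j ∈ I := by
            rw [← hfI]; exact (mem_Ifin_iff f j).mpr ⟨v.1, hfv⟩
          rw [hΨ] at hnone
          simp only [dif_pos (⟨j, hjI, hfv⟩ : ∃ j, j ∈ I ∧ f v.1 = some j)] at hnone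
          exact nomatch hnone
      · intro jj hjj
        rw [hΨ] at hjj
        by_cases h : ∃ j, j ∈ I ∧ f v.1 = some j
        · simp only [dif_pos h] at hjj
          have hspec := h.choose_spec.2
          have : h.choose = jj.1 := congrArg Subtype.val (Option.some_injective _ hjj)
          rwa [this] at hspec
        · simp only [dif_neg h] at hjj
          exact nomatch hjj
    have hinj : Set.InjOn Ψ ((GFin E t).filter (fun f => Ifin f = I)) := by
      intro f hf g hg hfg
      have hfG := (mem_GFin_iff E t f).mp (Finset.mem_filter.mp hf).1
      have hgG := (mem_GFin_iff E t g).mp (Finset.mem_filter.mp hg).1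
      have hfI : Ifin f = I := (Finset.mem_filter.mp hf).2
      have hgI : Ifin g = I := (Finset.mem_filter.mp hg).2
      funext v
      by_cases hv : v ∈ D
      · have hcong := congrFun hfg (⟨v, hv⟩ : {v // v ∈ D})
        rcases hΨf : Ψ f ⟨v, hv⟩ with _ | jj
        · rw [hΨf] at hcong
          rw [(hrec f hf ⟨v, hv⟩).1 hΨf, (hrec g hg ⟨v, hv⟩).1 hcong.symm]
        · rw [hΨf] at hcong
          rw [(hrec f hf ⟨v, hv⟩).2 jj hΨf, (hrec g hg ⟨v, hv⟩).2 jj hcong.symm]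
      · rw [hD] at hv
        simp only [Finset.mem_sdiff, Finset.mem_univ, true_and, not_not] at hv
        rw [hT] at hv
        rcases Finset.mem_insert.mp hv with h | h
        · rw [h, hfG.1, hgG.1]
        · obtain ⟨j, hj, hje⟩ := Finset.mem_image.mp h
          have h1 := (hfG.2 j ((mem_Ifin_iff f j).mp (hfI ▸ hj))).2.1
          have h2 := (hgG.2 j ((mem_Ifin_iff g j).mp (hgI ▸ hj))).2.1
          rw [hje] at h1 h2
          rw [h1, h2]
    have hcard := Finset.card_le_card_of_injOn Ψ
      (fun f _ => Finset.mem_univ (Ψ f)) hinj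
    calc ((GFin E t).filter (fun f => Ifin f = I)).card
        ≤ (Finset.univ : Finset ({v // v ∈ D} → Option {j // j ∈ I})).card := hcard
      _ = (I.card + 1) ^ (n - I.card - 1) := by
          rw [Finset.card_univ, Fintype.card_fun]
          simp [hDcard]

theorem GFin_card_le :
    (GFin E t).card ≤ ∑ i ∈ Finset.range (k + 1), Nat.choose k i * (i + 1) ^ (n - i - 1) := by
  classical
  have hfib := Finset.card_eq_sum_card_fiberwise
    (f := fun f => Ifin f) (s := GFin E t) (t := Finset.univ.powerset)
    (fun f _ => Finset.mem_powerset.mpr (Finset.subset_univ _))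
  rw [hfib]
  have hle : ∑ I ∈ Finset.univ.powerset, ((GFin E t).filter (fun f => Ifin f = I)).card
      ≤ ∑ I ∈ (Finset.univ : Finset (Fin k)).powerset, (I.card + 1) ^ (n - I.card - 1) :=
    Finset.sum_le_sum (fun I _ => fiber_card_le E t I)
  refine le_trans hle (le_of_eq ?_)
  rw [Finset.sum_powerset]
  simp only [Finset.card_univ, Fintype.card_fin]
  refine Finset.sum_congr rfl ?_
  intro i _
  rw [Finset.sum_congr rfl (fun I hI => by
    rw [(Finset.mem_powersetCard.mp hI).2]), Finset.sum_const, Finset.card_powersetCard]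
  simp [Finset.card_univ, mul_comm]

end Count

section Mem

variable {n k : ℕ} {E : Fin n → Fin n → Entry k} {t : Fin n} {P : (Fin k → ℝ) → Prop}

theorem psi_mem_GFin (hsep : SeparatedVars E) {par : Fin n → Fin n}
    (h : IsSPT E P t par) : psi E par t ∈ GFin E t := by
  have hreach := h.2.1
  rw [mem_GFin_iff]
  refine ⟨psi_t E par t, ?_⟩
  rintro j ⟨v, hv⟩
  have hvl := psi_some E t par hreach hsep hv
  have hjmem : j ∈ varsList E par t v := by rw [hvl]; exact List.mem_cons_self
  rw [varsList] at hjmem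
  obtain ⟨a, ha, hva⟩ := List.mem_filterMap.mp hjmem
  obtain ⟨a1, a2⟩ := a
  obtain ⟨c, hc⟩ := (varOf_some_iff E).mp hva
  have harc := arcOf_eq E t hsep hc
  have hfst : a1 ≠ t := path_fst_ne_t par t hreach ha
  have hsnd : a2 = par a1 := path_snd par t hreach ha
  refine ⟨by rw [harc]; exact hfst, ?_, ⟨c, by rw [harc]; exact hc⟩⟩
  rw [harc]
  have hstep := varsList_step E par t hreach hfst
  have hvo : varOf E (a1, par a1) = some j := by rw [← hsnd]; exact hva
  rw [psi, hstep, hvo]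
  rfl

theorem bound_choose {m : ℕ}
    (hm : (Finset.univ.filter fun p : Fin n × Fin n => (E p.1 p.2).isSome).card = m) :
    {par : Fin n → Fin n | IsSPT E P t par}.ncard ≤ Nat.choose m (n - 1) := by
  classical
  set Arcs := Finset.univ.filter fun p : Fin n × Fin n => (E p.1 p.2).isSome with hArcs
  set target := Arcs.powersetCard (n - 1) with htarget
  have hmaps : ∀ par ∈ {par : Fin n → Fin n | IsSPT E P t par},
      (Finset.univ.erase t).image (fun v => (v, par v)) ∈ (↑target : Set (Finset (Fin n × Fin n))) := by
    intro par hpar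
    simp only [Set.mem_setOf_eq] at hpar
    have hsome := hpar.2.2.1
    simp only [Finset.coe_insert, Set.mem_setOf_eq, Finset.mem_coe, htarget,
      Finset.mem_powersetCard]
    constructor
    · intro a ha
      obtain ⟨v, hv, rfl⟩ := Finset.mem_image.mp ha
      have hvt : v ≠ t := Finset.ne_of_mem_erase hv
      rw [hArcs]
      simp only [Finset.mem_filter, Finset.mem_univ, true_and]
      exact hsome v hvt
    · rw [Finset.card_image_of_injOn (fun u _ u' _ h => congrArg Prod.fst h)]
      rw [Finset.card_erase_of_mem (Finset.mem_univ t)]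
      simp
  have hinj : Set.InjOn (fun par : Fin n → Fin n =>
      (Finset.univ.erase t).image (fun v => (v, par v)))
      {par : Fin n → Fin n | IsSPT E P t par} := by
    intro par1 h1 par2 h2 heq
    simp only [Set.mem_setOf_eq] at h1 h2
    simp only at heq
    funext v
    by_cases hv : v = t
    · rw [hv, h1.1, h2.1]
    · have hmem1 : (v, par1 v) ∈ (Finset.univ.erase t).image (fun v => (v, par1 v)) :=
        Finset.mem_image.mpr ⟨v, Finset.mem_erase.mpr ⟨hv, Finset.mem_univ v⟩, rfl⟩
      rw [heq] at hmem1
      obtain ⟨u, _, hu⟩ := Finset.mem_image.mp hmem1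
      have hu1 : u = v := congrArg Prod.fst hu
      have hu2 : par2 u = par1 v := congrArg Prod.snd hu
      rw [← hu2, hu1]
  have hcard := Set.ncard_le_ncard_of_injOn _ hmaps hinj (target.finite_toSet)
  rw [Set.ncard_coe_finset] at hcard
  refine hcard.trans (le_of_eq ?_)
  rw [htarget, Finset.card_powersetCard, hArcs, hm]

theorem bound_phi (hsep : SeparatedVars E) (hgen : Generic E P) (hPne : ∃ x, P x) :
    {par : Fin n → Fin n | IsSPT E P t par}.ncard ≤
      ∑ i ∈ Finset.range (k + 1), Nat.choose k i * (i + 1) ^ (n - i - 1) := by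
  have hmaps : ∀ par ∈ {par : Fin n → Fin n | IsSPT E P t par},
      psi E par t ∈ (↑(GFin E t) : Set (Fin n → Option (Fin k))) := by
    intro par hpar
    exact Finset.mem_coe.mpr (psi_mem_GFin hsep hpar)
  have hinj : Set.InjOn (fun par => psi E par t)
      {par : Fin n → Fin n | IsSPT E P t par} := by
    intro par1 h1 par2 h2 heq
    exact determination hsep hgen hPne h1 h2 (fun v => congrFun heq v)
  have hcard := Set.ncard_le_ncard_of_injOn _ hmaps hinj ((GFin E t).finite_toSet)
  rw [Set.ncard_coe_finset] at hcard
  exact hcard.trans (GFin_card_le E t)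

end Mem

section Prufer

variable {n : ℕ}

/-- validity of a parent map on an active vertex set -/
def Valid (par : Fin n → Fin n) (t : Fin n) (s : Finset (Fin n)) : Prop :=
  par t = t ∧ t ∈ s ∧ (∀ v ∈ s, par v ∈ s) ∧ (∀ v, ∃ m : ℕ, par^[m] v = t)

def leafSet (par : Fin n → Fin n) (t : Fin n) (s : Finset (Fin n)) : Finset (Fin n) :=
  s \ ((s.erase t).image par)

def minOf (t : Fin n) (s : Finset (Fin n)) : Fin n :=
  if h : s.Nonempty then s.min' h else t

def code (par : Fin n → Fin n) (t : Fin n) : ℕ → Finset (Fin n) → List (Fin n)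
  | 0, _ => []
  | (f+1), s => if 3 ≤ s.card ∧ t ∈ s then
      par (minOf t (leafSet par t s)) ::
        code par t f (s.erase (minOf t (leafSet par t s)))
    else []

theorem leafSet_nonempty {par : Fin n → Fin n} {t : Fin n} {s : Finset (Fin n)}
    (ht : t ∈ s) : (leafSet par t s).Nonempty := by
  rw [leafSet, Finset.sdiff_nonempty]
  intro hsub
  have h1 : s.card ≤ ((s.erase t).image par).card := Finset.card_le_card hsub
  have h2 : ((s.erase t).image par).card ≤ (s.erase t).card := Finset.card_image_le
  have h3 : (s.erase t).card = s.card - 1 := Finset.card_erase_of_mem ht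
  have h4 : 0 < s.card := Finset.card_pos.mpr ⟨t, ht⟩
  omega

theorem minOf_mem_s {par : Fin n → Fin n} {t : Fin n} {s : Finset (Fin n)}
    (ht : t ∈ s) : minOf t (leafSet par t s) ∈ s := by
  have h := Finset.min'_mem _ (leafSet_nonempty (par := par) ht)
  rw [minOf, dif_pos (leafSet_nonempty ht)]
  have := Finset.mem_sdiff.mp (by rw [← leafSet]; exact h)
  exact this.1

theorem minOf_not_mem_image {par : Fin n → Fin n} {t : Fin n} {s : Finset (Fin n)}
    (ht : t ∈ s) : minOf t (leafSet par t s) ∉ (s.erase t).image par := by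
  have h := Finset.min'_mem _ (leafSet_nonempty (par := par) ht)
  rw [minOf, dif_pos (leafSet_nonempty ht)]
  have := Finset.mem_sdiff.mp (by rw [← leafSet]; exact h)
  exact this.2

theorem iterate_mem {par : Fin n → Fin n} {t : Fin n} {s : Finset (Fin n)}
    (hval : Valid par t s) {v : Fin n} (hv : v ∈ s) (i : ℕ) : par^[i] v ∈ s := by
  induction i with
  | zero => simpa using hv
  | succ i ih =>
    rw [Function.iterate_succ_apply']
    exact hval.2.2.1 _ ih

theorem par_eq_self_imp {par : Fin n → Fin n} {t : Fin n}
    (hreach : ∀ v, ∃ m : ℕ, par^[m] v = t) {v : Fin n} (h : par v = v) : v = t := by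
  obtain ⟨m, hm⟩ := hreach v
  have hall : ∀ i : ℕ, par^[i] v = v := by
    intro i
    induction i with
    | zero => rfl
    | succ i ih => rw [Function.iterate_succ_apply', ih, h]
  rw [hall m] at hm
  exact hm

theorem exists_ne_t {t : Fin n} {s : Finset (Fin n)} (ht : t ∈ s) (h2 : 2 ≤ s.card) :
    ∃ u ∈ s, u ≠ t := by
  by_contra hall
  push_neg at hall
  have hsub : s ⊆ {t} := fun v hv => Finset.mem_singleton.mpr (hall v hv)
  have := Finset.card_le_card hsub
  simp at this
  omega

theorem t_mem_image {par : Fin n → Fin n} {t : Fin n} {s : Finset (Fin n)}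
    (hval : Valid par t s) {u : Fin n} (hu : u ∈ s) (hut : u ≠ t) :
    t ∈ (s.erase t).image par := by
  have hreach := hval.2.2.2
  have hd1 : 0 < dep par t hreach u := dep_pos par t hreach hut
  have hw : par^[dep par t hreach u - 1] u ∈ s := iterate_mem hval hu _
  have hwt : par^[dep par t hreach u - 1] u ≠ t := dep_min par t hreach (by omega)
  have hpw : par (par^[dep par t hreach u - 1] u) = t := by
    have h0 : par^[dep par t hreach u - 1 + 1] u = t := by
      rw [show dep par t hreach u - 1 + 1 = dep par t hreach u by omega]
      exact iter_dep par t hreach u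
    rw [Function.iterate_succ_apply'] at h0
    exact h0
  exact Finset.mem_image.mpr ⟨_, Finset.mem_erase.mpr ⟨hwt, hw⟩, hpw⟩

theorem leaf_ne_t {par : Fin n → Fin n} {t : Fin n} {s : Finset (Fin n)}
    (hval : Valid par t s) (h2 : 2 ≤ s.card) :
    minOf t (leafSet par t s) ≠ t := by
  intro hc
  obtain ⟨u, hu, hut⟩ := exists_ne_t hval.2.1 h2
  exact minOf_not_mem_image (par := par) hval.2.1 (by rw [hc]; exact t_mem_image hval hu hut)

theorem valid_erase {par : Fin n → Fin n} {t : Fin n} {s : Finset (Fin n)}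
    (hval : Valid par t s) (h2 : 2 ≤ s.card) :
    Valid par t (s.erase (minOf t (leafSet par t s))) := by
  have ht := hval.2.1
  have hltne := leaf_ne_t hval h2
  refine ⟨hval.1, Finset.mem_erase.mpr ⟨Ne.symm hltne, ht⟩, ?_, hval.2.2.2⟩
  intro v hv
  have hvs : v ∈ s := Finset.mem_of_mem_erase hv
  refine Finset.mem_erase.mpr ⟨?_, hval.2.2.1 v hvs⟩
  intro hc
  by_cases hvt : v = t
  · rw [hvt, hval.1] at hc
    exact hltne hc.symm
  · exact minOf_not_mem_image (par := par) ht
      (by rw [← hc]; exact Finset.mem_image.mpr ⟨v, Finset.mem_erase.mpr ⟨hvt, hvs⟩, rfl⟩)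

theorem forced_small {par : Fin n → Fin n} {t : Fin n} {s : Finset (Fin n)}
    (hval : Valid par t s) (h2 : s.card ≤ 2) : ∀ v ∈ s, par v = t := by
  intro v hv
  by_cases hvt : v = t
  · rw [hvt]; exact hval.1
  · have hsub : {t, v} ⊆ s := by
      intro x hx
      rcases Finset.mem_insert.mp hx with h | h
      · rw [h]; exact hval.2.1
      · rw [Finset.mem_singleton.mp h]; exact hv
    have hcard2 : ({t, v} : Finset (Fin n)).card = 2 := by
      rw [Finset.card_insert_of_notMem (by simp [Ne.symm hvt]), Finset.card_singleton]
    have hse : s = {t, v} :=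
      (Finset.eq_of_subset_of_card_le hsub (by omega)).symm
    have hps : par v ∈ s := hval.2.2.1 v hv
    rw [hse] at hps
    rcases Finset.mem_insert.mp hps with h | h
    · exact h
    · rw [Finset.mem_singleton] at h
      exact absurd (par_eq_self_imp hval.2.2.2 h) hvt

theorem code_small {par : Fin n → Fin n} {t : Fin n} {s : Finset (Fin n)} {f : ℕ}
    (h : ¬ 3 ≤ s.card) : code par t f s = [] := by
  cases f with
  | zero => rfl
  | succ f =>
    simp only [code, if_neg (fun (hc : 3 ≤ s.card ∧ t ∈ s) => h hc.1)]

theorem code_length {par : Fin n → Fin n} {t : Fin n} :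
    ∀ (f : ℕ) (s : Finset (Fin n)), Valid par t s → s.card ≤ f + 2 →
      (code par t f s).length = s.card - 2 := by
  intro f
  induction f with
  | zero =>
    intro s hval hc
    simp only [code, List.length_nil]
    omega
  | succ f ih =>
    intro s hval hc
    by_cases h3 : 3 ≤ s.card
    · have hcond : 3 ≤ s.card ∧ t ∈ s := ⟨h3, hval.2.1⟩
      simp only [code, if_pos hcond, List.length_cons]
      have hm : minOf t (leafSet par t s) ∈ s := minOf_mem_s hval.2.1
      rw [ih _ (valid_erase hval (by omega))
        (by rw [Finset.card_erase_of_mem hm]; omega)]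
      rw [Finset.card_erase_of_mem hm]
      omega
    · rw [code_small h3]
      simp only [List.length_nil]
      omega

theorem code_image {par : Fin n → Fin n} {t : Fin n} :
    ∀ (f : ℕ) (s : Finset (Fin n)), Valid par t s → 2 ≤ s.card → s.card ≤ f + 2 →
      (s.erase t).image par = insert t (code par t f s).toFinset := by
  intro f
  induction f with
  | zero =>
    intro s hval h2 hc
    simp only [code, List.toFinset_nil, LawfulSingleton.insert_empty_eq]
    apply Finset.Subset.antisymm
    · intro x hx
      obtain ⟨u, hu, rfl⟩ := Finset.mem_image.mp hx
      rw [forced_small hval (by omega) u (Finset.mem_of_mem_erase hu)]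
      exact Finset.mem_singleton_self t
    · intro x hx
      rw [Finset.mem_singleton] at hx
      subst hx
      obtain ⟨u', hu', hut⟩ := exists_ne_t hval.2.1 h2
      exact t_mem_image hval hu' hut
  | succ f ih =>
    intro s hval h2 hc
    by_cases h3 : 3 ≤ s.card
    · have hcond : 3 ≤ s.card ∧ t ∈ s := ⟨h3, hval.2.1⟩
      simp only [code, if_pos hcond, List.toFinset_cons]
      have hm : minOf t (leafSet par t s) ∈ s := minOf_mem_s hval.2.1
      have hltne := leaf_ne_t hval (by omega)
      have hihyp := ih (s.erase (minOf t (leafSet par t s))) (valid_erase hval (by omega))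
        (by rw [Finset.card_erase_of_mem hm]; omega)
        (by rw [Finset.card_erase_of_mem hm]; omega)
      rw [Finset.insert_comm, ← hihyp, Finset.erase_right_comm]
      have hins : insert (minOf t (leafSet par t s))
          ((s.erase t).erase (minOf t (leafSet par t s))) = s.erase t :=
        Finset.insert_erase (Finset.mem_erase.mpr ⟨hltne, hm⟩)
      conv_lhs => rw [← hins]
      rw [Finset.image_insert]
    · rw [code_small h3]
      simp only [List.toFinset_nil, LawfulSingleton.insert_empty_eq]
      apply Finset.Subset.antisymm
      · intro x hx
        obtain ⟨u, hu, rfl⟩ := Finset.mem_image.mp hx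
        rw [forced_small hval (by omega) u (Finset.mem_of_mem_erase hu)]
        exact Finset.mem_singleton_self t
      · intro x hx
        rw [Finset.mem_singleton] at hx
        subst hx
        obtain ⟨u', hu', hut⟩ := exists_ne_t hval.2.1 h2
        exact t_mem_image hval hu' hut

theorem code_inj {t : Fin n} :
    ∀ (f : ℕ) (s : Finset (Fin n)) (par1 par2 : Fin n → Fin n),
      Valid par1 t s → Valid par2 t s → s.card ≤ f + 2 →
      code par1 t f s = code par2 t f s → ∀ v ∈ s, par1 v = par2 v := by
  intro f
  induction f with
  | zero =>
    intro s par1 par2 h1 h2 hc _ v hv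
    rw [forced_small h1 (by omega) v hv, forced_small h2 (by omega) v hv]
  | succ f ih =>
    intro s par1 par2 h1 h2 hc hcode v hv
    by_cases h3 : 3 ≤ s.card
    · have hcond : 3 ≤ s.card ∧ t ∈ s := ⟨h3, h1.2.1⟩
      have himg : (s.erase t).image par1 = (s.erase t).image par2 := by
        rw [code_image (f+1) s h1 (by omega) (by omega),
          code_image (f+1) s h2 (by omega) (by omega), hcode]
      have hleaf : leafSet par1 t s = leafSet par2 t s := by
        rw [leafSet, leafSet, himg]
      simp only [code, if_pos hcond] at hcode
      rw [hleaf] at hcode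
      have hm : minOf t (leafSet par2 t s) ∈ s := minOf_mem_s h2.2.1
      have hhead : par1 (minOf t (leafSet par2 t s)) = par2 (minOf t (leafSet par2 t s)) :=
        (List.cons_eq_cons.mp hcode).1
      have htail := (List.cons_eq_cons.mp hcode).2
      have hval1 : Valid par1 t (s.erase (minOf t (leafSet par2 t s))) := by
        rw [← hleaf]
        exact valid_erase h1 (by omega)
      have hval2 : Valid par2 t (s.erase (minOf t (leafSet par2 t s))) :=
        valid_erase h2 (by omega)
      by_cases hvℓ : v = minOf t (leafSet par2 t s)
      · rw [hvℓ]; exact hhead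
      · exact ih _ par1 par2 hval1 hval2
          (by rw [Finset.card_erase_of_mem hm]; omega) htail v
          (Finset.mem_erase.mpr ⟨hvℓ, hv⟩)
    · rw [forced_small h1 (by omega) v hv, forced_small h2 (by omega) v hv]

end Prufer

section Cayley

variable {n k : ℕ} {E : Fin n → Fin n → Entry k} {t : Fin n} {P : (Fin k → ℝ) → Prop}

theorem bound_cayley :
    {par : Fin n → Fin n | IsSPT E P t par}.ncard ≤ n ^ (n - 2) := by
  classical
  have hval : ∀ par : Fin n → Fin n, IsSPT E P t par → Valid par t Finset.univ :=
    fun par h => ⟨h.1, Finset.mem_univ t, fun v _ => Finset.mem_univ _, h.2.1⟩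
  have hcu : (Finset.univ : Finset (Fin n)).card = n := by simp
  have hmaps : ∀ par ∈ {par : Fin n → Fin n | IsSPT E P t par},
      (fun i : Fin (n-2) => (code par t n Finset.univ).getD i t) ∈
        (Set.univ : Set (Fin (n-2) → Fin n)) := fun _ _ => trivial
  have hinj : Set.InjOn (fun par => fun i : Fin (n-2) => (code par t n Finset.univ).getD i t)
      {par : Fin n → Fin n | IsSPT E P t par} := by
    intro par1 h1 par2 h2 heq
    simp only [Set.mem_setOf_eq] at h1 h2
    simp only at heq
    have hv1 := hval par1 h1
    have hv2 := hval par2 h2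
    have hl1 : (code par1 t n Finset.univ).length = n - 2 := by
      rw [code_length n Finset.univ hv1 (by omega), hcu]
    have hl2 : (code par2 t n Finset.univ).length = n - 2 := by
      rw [code_length n Finset.univ hv2 (by omega), hcu]
    have hcode : code par1 t n Finset.univ = code par2 t n Finset.univ := by
      apply List.ext_getElem (hl1.trans hl2.symm)
      intro i hi1 hi2
      have hilt : i < n - 2 := by omega
      have := congrFun heq ⟨i, hilt⟩
      simp only at this
      rwa [List.getD_eq_getElem _ _ hi1, List.getD_eq_getElem _ _ hi2] at this
    funext v
    exact code_inj n Finset.univ par1 par2 hv1 hv2 (by omega) hcode v (Finset.mem_univ v)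
  have hcard := Set.ncard_le_ncard_of_injOn _ hmaps hinj Set.finite_univ
  rw [Set.ncard_univ, Nat.card_eq_fintype_card, Fintype.card_fun] at hcard
  simpa using hcard

end Cayley
end SPTProof


/-- for a generic weighted adjacency matrix with separated variables,
nonnegative weights, `m` arcs and variable bounds `λ_i ≤ x_i ≤ μ_i` in `[0,∞]`, the
number of shortest-path trees with target `t` is at most
`min(Φ(n,k), n^{n-2}, C(m, n-1))` where `Φ(n,k) = ∑_{i=0}^{k} C(k,i) (i+1)^{n-i-1}`. -/
theorem count_spt_main {n m k : ℕ}
    (E : Fin n → Fin n → Entry k) (t : Fin n)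
    (lam : Fin k → ℝ) (mu : Fin k → WithTop ℝ)
    (hlam : ∀ i, 0 ≤ lam i) (hlm : ∀ i, (lam i : WithTop ℝ) ≤ mu i)
    (hm : (Finset.univ.filter fun p : Fin n × Fin n => (E p.1 p.2).isSome).card = m)
    (hnonneg : ∀ (u v : Fin n) (c : ℝ) (o : Option (Fin k)), E u v = some (c, o) → 0 ≤ c)
    (hsep : SeparatedVars E)
    (hgen : Generic E fun x => ∀ i, lam i ≤ x i ∧ (x i : WithTop ℝ) ≤ mu i) :
    {par : Fin n → Fin n |
        IsSPT E (fun x => ∀ i, lam i ≤ x i ∧ (x i : WithTop ℝ) ≤ mu i) t par}.ncard ≤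
      min (min (∑ i ∈ Finset.range (k + 1), Nat.choose k i * (i + 1) ^ (n - i - 1))
          (n ^ (n - 2)))
        (Nat.choose m (n - 1)) := by
  have hPne : ∃ x : Fin k → ℝ, ∀ i, lam i ≤ x i ∧ (x i : WithTop ℝ) ≤ mu i :=
    ⟨lam, fun i => ⟨le_refl _, hlm i⟩⟩
  refine le_min (le_min ?_ ?_) ?_
  · exact SPTProof.bound_phi hsep hgen hPne
  · exact SPTProof.bound_cayley
  · exact SPTProof.bound_choose hm
end

section
/- For all natural numbers n and k, the function Φ(n,k) = Σ_{i=0}^{k} C(k,i) · (i+1)^{n−i−1} satisfies Φ(n,k) ≤ (k+1)^{n−1} · (1 + 1/(k+1))^{k} < e · (k+1)^{n−1}, where e is Euler's constant and C(k,i) denotes the binomial coefficient. -/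
/-- for `n ≥ k + 1`, the quantity
`Φ(n,k) = ∑_{i=0}^{k} C(k,i) (i+1)^{n-i-1}` satisfies
`Φ(n,k) ≤ (k+1)^{n-1} (1 + 1/(k+1))^k < e (k+1)^{n-1}`. -/
theorem phi_le_euler_bound (n k : ℕ) (hnk : k + 1 ≤ n) :
    (∑ i ∈ Finset.range (k + 1), (Nat.choose k i : ℝ) * (i + 1) ^ (n - i - 1)) ≤
        (k + 1 : ℝ) ^ (n - 1) * (1 + 1 / (k + 1)) ^ k ∧
      (k + 1 : ℝ) ^ (n - 1) * (1 + 1 / (k + 1)) ^ k <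
        Real.exp 1 * (k + 1 : ℝ) ^ (n - 1) := by
  have hkpos : (0:ℝ) < (k:ℝ) + 1 := by positivity
  constructor
  · have h1 : ((1:ℝ) + 1/((k:ℝ)+1)) ^ k
        = ∑ i ∈ Finset.range (k+1), (k.choose i : ℝ) * (1/((k:ℝ)+1))^i := by
      rw [add_comm (1:ℝ), add_pow]
      refine Finset.sum_congr rfl fun i hi => by ring
    rw [h1, Finset.mul_sum]
    apply Finset.sum_le_sum
    intro i hi
    have hik : i ≤ k := Nat.lt_succ_iff.mp (Finset.mem_range.mp hi)
    have hin : i ≤ n - 1 := by omega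
    have hsplit : ((k:ℝ)+1)^(n-1) = ((k:ℝ)+1)^(n-1-i) * ((k:ℝ)+1)^i := by
      rw [← pow_add]; congr 1; omega
    have heq : ((k:ℝ)+1)^(n-1) * ((k.choose i : ℝ) * (1/((k:ℝ)+1))^i)
        = (k.choose i : ℝ) * ((k:ℝ)+1)^(n-1-i) := by
      rw [hsplit, one_div, inv_pow]
      field_simp
    rw [heq]
    have hexp : n - i - 1 = n - 1 - i := by omega
    rw [hexp]
    have hb : ((i:ℝ)+1) ≤ ((k:ℝ)+1) := by exact_mod_cast Nat.succ_le_succ hik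
    gcongr
  · have h2 : ((1:ℝ) + 1/((k:ℝ)+1)) ^ k < Real.exp 1 := by
      calc ((1:ℝ) + 1/((k:ℝ)+1)) ^ k ≤ (Real.exp (1/((k:ℝ)+1))) ^ k := by
            have := Real.add_one_le_exp (1/((k:ℝ)+1))
            gcongr
            linarith
        _ = Real.exp (k * (1/((k:ℝ)+1))) := by
            rw [← Real.exp_nat_mul]
        _ < Real.exp 1 := by
            apply Real.exp_lt_exp.mpr
            rw [mul_one_div, div_lt_one hkpos]
            linarith
    calc ((k:ℝ)+1)^(n-1) * ((1:ℝ) + 1/((k:ℝ)+1))^k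
        < ((k:ℝ)+1)^(n-1) * Real.exp 1 := by
          have hp : (0:ℝ) < ((k:ℝ)+1)^(n-1) := by positivity
          exact (mul_lt_mul_iff_right₀ hp).mpr h2
      _ = Real.exp 1 * ((k:ℝ)+1)^(n-1) := by ring
end
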